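/- arXiv:1009.0121 — 5 statements merged into one kernel-verified Lean document; each statement's English description precedes it below -/
import Mathlib

section
/- Let R be an idealic semiring and f : A → B a homomorphism of complete idealic semirings. For a prime element p of B, the inverse image f⁻¹(p) := sup { x ∈ A | f(x) ≤ p } is a prime element of A. -/
/-- An element `p` of an idealic semiring is prime if `{a | a ≰ p}` is a multiplicative
submonoid: `1 ≰ p`, and `a ≰ p, b ≰ p` imply `a*b ≰ p`. -/
def IsPrimeElt {R : Type*} [LE R] [Mul R] [One R] (p : R) : Prop :=
  ¬ (1 : R) ≤ p ∧ ∀ a b : R, ¬ a ≤ p → ¬ b ≤ p → ¬ a * b ≤ p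

/-- For a homomorphism `f : A → B` of complete idealic semirings and a
prime element `p` of `B`, the inverse image `f⁻¹(p) = sup {x | f x ≤ p}` is a prime
element of `A`. -/
theorem stmt10 {A B : Type*} [CompleteLattice A] [CommMonoid A]
    [CompleteLattice B] [CommMonoid B]
    (hdistA : ∀ (a : A) (S : Set A), a * sSup S = ⨆ b ∈ S, a * b)
    (h1A : (1 : A) = ⊤)
    (hdistB : ∀ (a : B) (S : Set B), a * sSup S = ⨆ b ∈ S, a * b)
    (h1B : (1 : B) = ⊤)
    (f : A → B)
    (hsup : ∀ S : Set A, f (sSup S) = sSup (f '' S))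
    (hmul : ∀ a b : A, f (a * b) = f a * f b)
    (hone : f 1 = 1)
    (p : B) (hp : IsPrimeElt p) :
    IsPrimeElt (sSup {x : A | f x ≤ p}) := by
  have hmono : ∀ a b : A, a ≤ b → f a ≤ f b := by
    intro a b hab
    have h1 : sSup ({a, b} : Set A) = b := by
      simp [sSup_pair, sup_eq_right.mpr hab]
    have h2 := hsup ({a, b} : Set A)
    rw [h1] at h2
    rw [h2]
    exact le_sSup ⟨a, by simp⟩
  have hfq : f (sSup {x : A | f x ≤ p}) ≤ p := by
    rw [hsup]
    apply sSup_le
    rintro b ⟨x, hx, rfl⟩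
    exact hx
  have key : ∀ x : A, x ≤ sSup {x : A | f x ≤ p} ↔ f x ≤ p := by
    intro x
    constructor
    · intro h
      exact le_trans (hmono _ _ h) hfq
    · intro h
      exact le_sSup h
  constructor
  · rw [key, hone]
    exact hp.1
  · intro a b ha hb hab
    rw [key] at ha hb hab
    rw [hmul] at hab
    exact hp.2 _ _ ha hb hab
end

section
/- The functor Spec : IRng† → Sob^op sending a complete idealic semiring to its space of prime elements is left adjoint to the functor C : Sob^op → IRng† sending a sober space X to its lattice of closed sets (with join = intersection, multiplication = union). The unit is a ↦ V(a) and the counit sends x ∈ X to the closure of {x}, and the counit is a homeomorphism. -/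
/-- The spectrum of an idealic semiring: its set of prime elements. -/
def SpecT (R : Type*) [LE R] [Mul R] [One R] : Type _ := {p : R // IsPrimeElt p}

/-- The topology on the spectrum, with closed sets the `V(a) = {p | a ≤ p}`. -/
instance (R : Type*) [LE R] [Mul R] [One R] : TopologicalSpace (SpecT R) :=
  TopologicalSpace.generateFrom {U : Set (SpecT R) | ∃ a : R, U = {p : SpecT R | ¬ a ≤ p.1}}

def Vset {R : Type*} [LE R] [Mul R] [One R] (a : R) : Set (SpecT R) :=
  {p : SpecT R | a ≤ p.1}

lemma isClosed_Vset {R : Type*} [LE R] [Mul R] [One R] (a : R) : IsClosed (Vset a) := by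
  rw [← isOpen_compl_iff]
  exact TopologicalSpace.isOpen_generateFrom_of_mem
    ⟨a, by ext p; simp [Vset]⟩

/-- The lattice `C(X)` of closed subsets of `X`, ordered by reverse inclusion
(so supremum = intersection, bottom = `X`, top = `∅`). -/
abbrev Cl (X : Type*) [TopologicalSpace X] := (TopologicalSpace.Closeds X)ᵒᵈ

/-- Multiplication on `C(X)` is union of closed sets, with unit `∅` (the top element). -/
instance (X : Type*) [TopologicalSpace X] : CommMonoid (Cl X) where
  mul a b := a ⊓ b
  one := ⊤
  mul_assoc a b c := inf_assoc a b c
  mul_comm a b := inf_comm a b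
  one_mul a := top_inf_eq a
  mul_one a := inf_top_eq a

/-- A homomorphism of complete idealic semirings from `R` to the semiring `C(X)` of
closed subsets of `X`: it preserves arbitrary suprema, multiplication and `1`. -/
def IsHom {R X : Type*} [CompleteLattice R] [CommMonoid R] [TopologicalSpace X]
    (h : R → Cl X) : Prop :=
  (∀ S : Set R, h (sSup S) = sSup (h '' S)) ∧
  (∀ a b : R, h (a * b) = h a * h b) ∧
  h 1 = 1

/-- The map `Hom_Top(X, Spec R) → (R → C(X))`, `g ↦ (a ↦ g⁻¹(V(a)))`. -/
def specMap {R X : Type*} [CompleteLattice R] [CommMonoid R] [TopologicalSpace X]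
    (g : C(X, SpecT R)) : R → Cl X :=
  fun a => OrderDual.toDual ⟨g ⁻¹' Vset a, (isClosed_Vset a).preimage g.continuous⟩

section Aux

open TopologicalSpace OrderDual

variable {X : Type*} [TopologicalSpace X]

/-- The underlying set of an element of `Cl X`. -/
def clSet (u : Cl X) : Set X := (OrderDual.ofDual u : TopologicalSpace.Closeds X)

lemma clSet_injective : Function.Injective (clSet (X := X)) := fun _ _ h =>
  OrderDual.ofDual.injective (SetLike.coe_injective h)

lemma isClosed_clSet (u : Cl X) : IsClosed (clSet u) := (OrderDual.ofDual u).isClosed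

lemma clSet_mul (u v : Cl X) : clSet (u * v) = clSet u ∪ clSet v :=
  Closeds.coe_sup (ofDual u) (ofDual v)

lemma clSet_one : clSet (1 : Cl X) = ∅ := Closeds.coe_bot

lemma le_iff_clSet {u v : Cl X} : u ≤ v ↔ clSet v ⊆ clSet u := by
  constructor
  · intro h
    exact SetLike.coe_subset_coe.2 h
  · intro h
    exact (SetLike.coe_subset_coe.1 h : OrderDual.ofDual v ≤ OrderDual.ofDual u)

lemma clSet_sSup (S : Set (Cl X)) : clSet (sSup S) = ⋂ u ∈ S, clSet u := by
  have h : clSet (sSup S) = ((sInf (OrderDual.toDual ⁻¹' S) : Closeds X) : Set X) := by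
    rw [clSet, ofDual_sSup]
  rw [h, Closeds.coe_sInf]
  ext x
  simp only [Set.mem_iInter, Set.mem_preimage]
  exact ⟨fun h u hu => h (ofDual u) hu, fun h i hi => h (toDual i) hi⟩

variable {R : Type*} [CompleteLattice R] [CommMonoid R]

lemma mul_le_left' (hdist : ∀ (a : R) (S : Set R), a * sSup S = ⨆ b ∈ S, a * b)
    (h1 : (1 : R) = ⊤) (a b : R) : a * b ≤ a := by
  have h := hdist a ({b, 1} : Set R)
  have hs : sSup ({b, 1} : Set R) = 1 := by
    rw [sSup_pair, h1]; exact sup_top_eq b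
  have h2 : (⨆ c ∈ ({b, 1} : Set R), a * c) = a * b ⊔ a * 1 := iSup_pair
  rw [hs, mul_one, h2, mul_one] at h
  exact le_of_le_of_eq le_sup_left h.symm

lemma mul_le_iff (hdist : ∀ (a : R) (S : Set R), a * sSup S = ⨆ b ∈ S, a * b)
    (h1 : (1 : R) = ⊤) (p : SpecT R) (a b : R) :
    a * b ≤ p.1 ↔ a ≤ p.1 ∨ b ≤ p.1 := by
  constructor
  · intro h
    by_contra hc
    push_neg at hc
    exact p.2.2 a b hc.1 hc.2 h
  · rintro (h | h)
    · exact le_trans (mul_le_left' hdist h1 a b) h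
    · exact le_trans (by rw [mul_comm]; exact mul_le_left' hdist h1 b a) h

end Aux

/-- `Spec : IRng† → Sob^op` is left adjoint to the closed-set functor
`C : Sob^op → IRng†`: for a complete idealic semiring `R` and a sober space `X`,
`g ↦ (a ↦ g⁻¹(V a))` is a bijection from continuous maps `X → Spec R` onto
homomorphisms `R → C(X)`; the unit `a ↦ V(a)` is a homomorphism `R → C(Spec R)`,
and the counit `x ↦ closure {x} : X → Spec C(X)` is a homeomorphism. -/
theorem stmt12 {R X : Type*} [CompleteLattice R] [CommMonoid R]
    (hdist : ∀ (a : R) (S : Set R), a * sSup S = ⨆ b ∈ S, a * b)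
    (h1 : (1 : R) = ⊤)
    [TopologicalSpace X] [QuasiSober X] [T0Space X] :
    (∀ g : C(X, SpecT R), IsHom (specMap g)) ∧
    Function.Injective (specMap (R := R) (X := X)) ∧
    (∀ h : R → Cl X, IsHom h → ∃ g : C(X, SpecT R), specMap g = h) ∧
    IsHom (fun a : R =>
      OrderDual.toDual (⟨Vset a, isClosed_Vset a⟩ : TopologicalSpace.Closeds (SpecT R))) ∧
    ∃ e : X ≃ₜ SpecT (Cl X),
      ∀ x : X, ((OrderDual.ofDual (e x).1 : TopologicalSpace.Closeds X) : Set X)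
        = closure {x} := by
  have hmulle : ∀ (a b : R) (p : SpecT R), a * b ≤ p.1 ↔ a ≤ p.1 ∨ b ≤ p.1 :=
    fun a b p => mul_le_iff hdist h1 p a b
  have hspecset : ∀ (g : C(X, SpecT R)) (a : R), clSet (specMap g a) = g ⁻¹' Vset a :=
    fun g a => rfl
  refine ⟨?_, ?_, ?_, ?_, ?_⟩
  · -- specMap g is a hom
    intro g
    refine ⟨?_, ?_, ?_⟩
    · intro S
      apply clSet_injective
      rw [clSet_sSup, hspecset]
      ext x
      simp only [Set.mem_preimage, Vset, Set.mem_setOf_eq, sSup_le_iff, Set.mem_iInter,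
        Set.mem_image]
      constructor
      · rintro h u ⟨a, haS, rfl⟩
        exact h a haS
      · intro h a haS
        exact h _ ⟨a, haS, rfl⟩
    · intro a b
      apply clSet_injective
      rw [clSet_mul, hspecset, hspecset, hspecset]
      ext x
      simp only [Set.mem_preimage, Vset, Set.mem_setOf_eq, Set.mem_union]
      exact hmulle a b (g x)
    · apply clSet_injective
      rw [clSet_one, hspecset]
      ext x
      simp only [Set.mem_preimage, Vset, Set.mem_setOf_eq, Set.mem_empty_iff_false, iff_false]
      exact (g x).2.1
  · -- injectivity
    intro g g' hgg'
    ext x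
    apply Subtype.ext
    have key : ∀ a : R, a ≤ (g x).1 ↔ a ≤ (g' x).1 := by
      intro a
      have := congrArg clSet (congrFun hgg' a)
      rw [hspecset, hspecset] at this
      have hx := Set.ext_iff.1 this x
      simpa [Vset] using hx
    exact le_antisymm ((key _).1 le_rfl) ((key _).2 le_rfl)
  · -- surjectivity
    intro h hh
    obtain ⟨hsup, hmul, hone⟩ := hh
    have hmono : ∀ (a b : R), a ≤ b → clSet (h b) ⊆ clSet (h a) := by
      intro a b hab
      have hs : sSup ({a, b} : Set R) = b := by
        rw [sSup_pair]; exact sup_eq_right.2 hab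
      have := hsup ({a, b} : Set R)
      rw [hs] at this
      rw [this, clSet_sSup]
      intro x hx
      exact Set.mem_iInter₂.1 hx (h a) ⟨a, Set.mem_insert a {b}, rfl⟩
    set f : X → SpecT R := fun x =>
      ⟨sSup {a : R | x ∈ clSet (h a)}, by
        constructor
        · intro hle
          have hx : x ∈ clSet (h 1) := hmono 1 _ hle (by
            rw [hsup]
            rw [clSet_sSup]
            apply Set.mem_iInter₂.2
            rintro u ⟨a, ha, rfl⟩
            exact ha)
          rw [hone, clSet_one] at hx
          exact hx
        · intro a b ha hb hab
          have hxa : x ∉ clSet (h a) := fun hx => ha (le_sSup hx)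
          have hxb : x ∉ clSet (h b) := fun hx => hb (le_sSup hx)
          have hx : x ∈ clSet (h (a * b)) := hmono _ _ hab (by
            rw [hsup]
            rw [clSet_sSup]
            apply Set.mem_iInter₂.2
            rintro u ⟨c, hc, rfl⟩
            exact hc)
          rw [hmul, clSet_mul] at hx
          rcases hx with hx | hx
          · exact hxa hx
          · exact hxb hx⟩ with hf
    have key : ∀ (a : R) (x : X), a ≤ (f x).1 ↔ x ∈ clSet (h a) := by
      intro a x
      constructor
      · intro hle
        refine hmono a _ hle ?_
        rw [hsup, clSet_sSup]
        apply Set.mem_iInter₂.2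
        rintro u ⟨c, hc, rfl⟩
        exact hc
      · intro hx
        exact le_sSup hx
    have hcont : Continuous f := by
      rw [continuous_generateFrom_iff]
      rintro U ⟨a, rfl⟩
      have : f ⁻¹' {p : SpecT R | ¬a ≤ p.1} = (clSet (h a))ᶜ := by
        ext x
        simp only [Set.mem_preimage, Set.mem_setOf_eq, Set.mem_compl_iff]
        exact not_congr (key a x)
      rw [this]
      exact (isClosed_clSet _).isOpen_compl
    refine ⟨⟨f, hcont⟩, ?_⟩
    funext a
    apply clSet_injective
    rw [hspecset]
    ext x
    simp only [Set.mem_preimage, Vset, Set.mem_setOf_eq, ContinuousMap.coe_mk]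
    exact key a x
  · -- unit is a hom
    have hVset : ∀ a : R,
        clSet (OrderDual.toDual (⟨Vset a, isClosed_Vset a⟩ :
          TopologicalSpace.Closeds (SpecT R))) = Vset a := fun _ => rfl
    refine ⟨?_, ?_, ?_⟩
    · intro S
      apply clSet_injective
      rw [clSet_sSup, hVset]
      ext p
      simp only [Vset, Set.mem_setOf_eq, sSup_le_iff, Set.mem_iInter, Set.mem_image]
      constructor
      · rintro h u ⟨a, haS, rfl⟩
        exact h a haS
      · intro h a haS
        exact h _ ⟨a, haS, rfl⟩
    · intro a b
      apply clSet_injective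
      rw [clSet_mul, hVset, hVset, hVset]
      ext p
      simp only [Vset, Set.mem_setOf_eq, Set.mem_union]
      exact hmulle a b p
    · apply clSet_injective
      rw [clSet_one, hVset]
      ext p
      simp only [Vset, Set.mem_setOf_eq, Set.mem_empty_iff_false, iff_false]
      exact p.2.1
  · -- counit is a homeomorphism
    set e0 : X → SpecT (Cl X) := fun x =>
      ⟨OrderDual.toDual ⟨closure {x}, isClosed_closure⟩, by
        constructor
        · intro hle
          have : x ∈ clSet (1 : Cl X) := by
            have := le_iff_clSet.1 hle
            exact this (subset_closure rfl)
          rw [clSet_one] at this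
          exact this
        · intro u v hu hv huv
          have hxu : x ∉ clSet u := fun hx => hu (le_iff_clSet.2 (by
            show closure {x} ⊆ clSet u
            exact (isClosed_clSet u).closure_subset_iff.2 (Set.singleton_subset_iff.2 hx)))
          have hxv : x ∉ clSet v := fun hx => hv (le_iff_clSet.2 (by
            show closure {x} ⊆ clSet v
            exact (isClosed_clSet v).closure_subset_iff.2 (Set.singleton_subset_iff.2 hx)))
          have := le_iff_clSet.1 huv (subset_closure rfl)
          rw [clSet_mul] at this
          rcases this with hx | hx
          · exact hxu hx
          · exact hxv hx⟩ with he0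
    have hmem : ∀ (u : Cl X) (x : X), u ≤ (e0 x).1 ↔ x ∈ clSet u := by
      intro u x
      rw [le_iff_clSet]
      show closure {x} ⊆ clSet u ↔ _
      rw [(isClosed_clSet u).closure_subset_iff, Set.singleton_subset_iff]
    have hclosure : ∀ x : X, clSet (e0 x).1 = closure {x} := fun _ => rfl
    have hinj : Function.Injective e0 := by
      intro x y hxy
      have : closure ({x} : Set X) = closure {y} := by
        rw [← hclosure x, ← hclosure y, hxy]
      exact (inseparable_iff_closure_eq.2 this).eq
    have hsurj : Function.Surjective e0 := by
      intro p
      have hne : (clSet p.1).Nonempty := by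
        by_contra hc
        rw [Set.not_nonempty_iff_eq_empty] at hc
        exact p.2.1 (le_iff_clSet.2 (by rw [clSet_one]; exact hc ▸ Set.Subset.rfl))
      have hpre : IsPreirreducible (clSet p.1) := by
        rw [isPreirreducible_iff_isClosed_union_isClosed]
        intro z₁ z₂ hz₁ hz₂ hsub
        set u : Cl X := OrderDual.toDual ⟨z₁, hz₁⟩
        set v : Cl X := OrderDual.toDual ⟨z₂, hz₂⟩
        have huv : u * v ≤ p.1 := le_iff_clSet.2 (by rw [clSet_mul]; exact hsub)
        by_contra hc
        push_neg at hc
        have h1' : ¬ u ≤ p.1 := fun h => hc.1 (le_iff_clSet.1 h)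
        have h2' : ¬ v ≤ p.1 := fun h => hc.2 (le_iff_clSet.1 h)
        exact p.2.2 u v h1' h2' huv
      obtain ⟨x, hx⟩ := QuasiSober.sober ⟨hne, hpre⟩ (isClosed_clSet p.1)
      refine ⟨x, Subtype.ext (clSet_injective ?_)⟩
      rw [hclosure]
      exact hx
    have hcont : Continuous e0 := by
      rw [continuous_generateFrom_iff]
      rintro U ⟨u, rfl⟩
      have : e0 ⁻¹' {p : SpecT (Cl X) | ¬u ≤ p.1} = (clSet u)ᶜ := by
        ext x
        simp only [Set.mem_preimage, Set.mem_setOf_eq, Set.mem_compl_iff]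
        exact not_congr (hmem u x)
      rw [this]
      exact (isClosed_clSet _).isOpen_compl
    have himg : ∀ (C : Set X) (hC : IsClosed C),
        e0 '' C = Vset (OrderDual.toDual ⟨C, hC⟩ : Cl X) := by
      intro C hC
      ext p
      constructor
      · rintro ⟨x, hx, rfl⟩
        exact (hmem _ x).2 hx
      · intro hp
        obtain ⟨x, rfl⟩ := hsurj p
        exact ⟨x, (hmem _ x).1 hp, rfl⟩
    set e' : X ≃ SpecT (Cl X) := Equiv.ofBijective e0 ⟨hinj, hsurj⟩ with he'
    have hopen : IsOpenMap e' := by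
      intro U hU
      have : e' '' U = (Vset (OrderDual.toDual ⟨Uᶜ, hU.isClosed_compl⟩ : Cl X))ᶜ := by
        rw [← himg _ hU.isClosed_compl]
        have : e' '' U = e' '' (Uᶜ)ᶜ := by rw [compl_compl]
        rw [this, Equiv.image_compl]
        rfl
      rw [this]
      exact (isClosed_Vset _).isOpen_compl
    refine ⟨Equiv.toHomeomorphOfContinuousOpen e' hcont hopen, ?_⟩
    intro x
    exact hclosure x
end

section
/- For a sober topological space X, the complete lattice C(X) of closed subsets of X, with supremum = intersection and multiplication = union, is a complete idealic semiring with idempotent multiplication, and the map sending x ∈ X to the closure of {x} is a homeomorphism from X onto Spec C(X) (the space of prime elements of C(X) with the V-topology). -/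
namespace Stmt13Aux

open TopologicalSpace OrderDual

variable {X : Type*} [TopologicalSpace X]

lemma le_iff (a b : Cl X) :
    a ≤ b ↔ ((ofDual b : Closeds X) : Set X) ⊆ ((ofDual a : Closeds X) : Set X) :=
  Iff.rfl

lemma mul_coe (a b : Cl X) :
    ((ofDual (a * b) : Closeds X) : Set X) =
      ((ofDual a : Closeds X) : Set X) ∪ ((ofDual b : Closeds X) : Set X) := by
  show ((ofDual a ⊔ ofDual b : Closeds X) : Set X) = _
  exact Closeds.coe_sup _ _

lemma one_coe : ((ofDual (1 : Cl X) : Closeds X) : Set X) = ∅ := Closeds.coe_bot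

lemma isPrime_iff (p : Cl X) :
    IsPrimeElt p ↔ IsIrreducible ((ofDual p : Closeds X) : Set X) := by
  constructor
  · rintro ⟨h1, h2⟩
    constructor
    · rw [Set.nonempty_iff_ne_empty]
      intro he
      exact h1 (by rw [le_iff, one_coe, he])
    · rw [isPreirreducible_iff_isClosed_union_isClosed]
      intro z₁ z₂ hz₁ hz₂ hsub
      by_contra hc
      push_neg at hc
      exact h2 (toDual ⟨z₁, hz₁⟩) (toDual ⟨z₂, hz₂⟩) hc.1 hc.2
        (by rw [le_iff, mul_coe]; exact hsub)
  · rintro ⟨hne, hpre⟩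
    constructor
    · rw [le_iff, one_coe, Set.subset_empty_iff]
      exact Set.nonempty_iff_ne_empty.mp hne
    · intro a b ha hb hab
      rw [le_iff, mul_coe] at hab
      rcases (isPreirreducible_iff_isClosed_union_isClosed.mp hpre) _ _
        (ofDual a).isClosed (ofDual b).isClosed hab with h | h
      · exact ha h
      · exact hb h

lemma closure_le_iff {x : X} {a : Cl X} :
    a ≤ toDual ⟨closure {x}, isClosed_closure⟩ ↔ x ∈ ((ofDual a : Closeds X) : Set X) := by
  rw [le_iff]
  constructor
  · intro h; exact h (subset_closure rfl)
  · intro h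
    exact closure_minimal (Set.singleton_subset_iff.mpr h) (ofDual a).isClosed

variable [QuasiSober X] [T0Space X]

/-- The forward map. -/
noncomputable def eFun (x : X) : SpecT (Cl X) :=
  ⟨toDual ⟨closure {x}, isClosed_closure⟩,
    (isPrime_iff _).mpr (by simpa using (isIrreducible_singleton (x := x)).closure)⟩

/-- The inverse map: the generic point. -/
noncomputable def eInv (p : SpecT (Cl X)) : X :=
  ((isPrime_iff _).mp p.2).genericPoint

lemma eInv_spec (p : SpecT (Cl X)) :
    closure ({eInv p} : Set X) = ((ofDual p.1 : Closeds X) : Set X) :=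
  ((isPrime_iff _).mp p.2).isGenericPoint_genericPoint (ofDual p.1).isClosed

lemma left_inv (x : X) : eInv (eFun x) = x := by
  have h := eInv_spec (eFun x)
  have : closure ({eInv (eFun x)} : Set X) = closure ({x} : Set X) := h
  exact (inseparable_iff_closure_eq.mpr this).eq

lemma right_inv (p : SpecT (Cl X)) : eFun (eInv p) = p := by
  apply Subtype.ext
  show toDual (⟨closure {eInv p}, isClosed_closure⟩ : TopologicalSpace.Closeds X) = p.1
  rw [← toDual_ofDual p.1]
  congr 1
  exact Closeds.ext (eInv_spec p)

lemma continuous_eFun : Continuous (eFun (X := X)) := by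
  rw [continuous_generateFrom_iff]
  rintro U ⟨a, rfl⟩
  have h : eFun (X := X) ⁻¹' {p : SpecT (Cl X) | ¬ a ≤ p.1}
      = (((ofDual a : Closeds X) : Set X))ᶜ := by
    ext x
    simp only [Set.mem_preimage, Set.mem_setOf_eq, Set.mem_compl_iff]
    exact not_congr closure_le_iff
  rw [h]
  exact (ofDual a).isClosed.isOpen_compl

lemma continuous_eInv : Continuous (eInv (X := X)) := by
  rw [continuous_def]
  intro U hU
  have h : eInv (X := X) ⁻¹' U
      = {p : SpecT (Cl X) | ¬ (toDual ⟨Uᶜ, hU.isClosed_compl⟩ : Cl X) ≤ p.1} := by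
    ext p
    simp only [Set.mem_preimage, Set.mem_setOf_eq]
    rw [le_iff]
    show eInv p ∈ U ↔ ¬ ((ofDual p.1 : Closeds X) : Set X) ⊆ Uᶜ
    rw [← eInv_spec p]
    have := not_congr (closure_le_iff (x := eInv p) (a := (toDual ⟨Uᶜ, hU.isClosed_compl⟩ : Cl X)))
    rw [le_iff] at this
    simpa [Set.mem_compl_iff] using this.symm
  rw [h]
  exact TopologicalSpace.isOpen_generateFrom_of_mem ⟨_, rfl⟩

/-- The homeomorphism. -/
noncomputable def homeo : X ≃ₜ SpecT (Cl X) where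
  toFun := eFun
  invFun := eInv
  left_inv := left_inv
  right_inv := right_inv
  continuous_toFun := continuous_eFun
  continuous_invFun := continuous_eInv

end Stmt13Aux

/-- For a sober space `X`, the lattice of closed subsets of `X` with
supremum = intersection and multiplication = union is a complete idealic semiring
with idempotent multiplication, and `x ↦ closure {x}` is a homeomorphism of `X`
onto `Spec C(X)`. -/
theorem stmt13 {X : Type*} [TopologicalSpace X] [QuasiSober X] [T0Space X] :
    (∀ a : Cl X, a * a = a) ∧
    ((1 : Cl X) = ⊤) ∧
    (∀ (a : Cl X) (S : Set (Cl X)), a * sSup S = ⨆ b ∈ S, a * b) ∧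
    ∃ e : X ≃ₜ SpecT (Cl X),
      ∀ x : X, ((OrderDual.ofDual (e x).1 : TopologicalSpace.Closeds X) : Set X)
        = closure {x} := by
  refine ⟨fun a => inf_idem a, rfl, fun a S => inf_sSup_eq, Stmt13Aux.homeo, fun x => rfl⟩
end

section
/- Let R be an algebraic complete idealic semiring and a, b ∈ R. The following are equivalent: (i) for every compact x ≤ a there exists n ∈ ℕ with xⁿ ≤ b; (ii) √a ≤ √b, where √a = sup { x | xⁿ ≤ a for some n ≥ 1 }; (iii) V(a) ⊇ V(b) in Spec R, i.e., every prime p ≥ b satisfies p ≥ a. -/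
open CompleteLattice

section Aux

variable {R : Type*} [CompleteLattice R] [CommMonoid R]

lemma aux_mul_sup (hdist : ∀ (a : R) (S : Set R), a * sSup S = ⨆ b ∈ S, a * b)
    (a x y : R) : a * (x ⊔ y) = a * x ⊔ a * y := by
  have h := hdist a {x, y}
  rw [sSup_pair] at h
  simpa [iSup_or, iSup_sup_eq] using h

lemma aux_sup_mul (hdist : ∀ (a : R) (S : Set R), a * sSup S = ⨆ b ∈ S, a * b)
    (a x y : R) : (x ⊔ y) * a = x * a ⊔ y * a := by
  rw [mul_comm, aux_mul_sup hdist, mul_comm a x, mul_comm a y]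

lemma aux_mul_mono (hdist : ∀ (a : R) (S : Set R), a * sSup S = ⨆ b ∈ S, a * b)
    {x y : R} (h : x ≤ y) (a : R) : a * x ≤ a * y := by
  have := aux_mul_sup hdist a x y
  rw [sup_eq_right.mpr h] at this
  rw [this]; exact le_sup_left

lemma aux_le_one (h1 : (1 : R) = ⊤) (x : R) : x ≤ 1 := h1 ▸ le_top

lemma aux_mul_le_left (hdist : ∀ (a : R) (S : Set R), a * sSup S = ⨆ b ∈ S, a * b)
    (h1 : (1 : R) = ⊤) (x y : R) : x * y ≤ x := by
  calc x * y ≤ x * 1 := aux_mul_mono hdist (aux_le_one h1 y) x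
  _ = x := mul_one x

lemma aux_mul_le_right (hdist : ∀ (a : R) (S : Set R), a * sSup S = ⨆ b ∈ S, a * b)
    (h1 : (1 : R) = ⊤) (x y : R) : x * y ≤ y := by
  rw [mul_comm]; exact aux_mul_le_left hdist h1 y x

lemma aux_mul_mono' (hdist : ∀ (a : R) (S : Set R), a * sSup S = ⨆ b ∈ S, a * b)
    {x y x' y' : R} (h : x ≤ x') (h' : y ≤ y') : x * y ≤ x' * y' :=
  le_trans (aux_mul_mono hdist h' x) (by rw [mul_comm x y', mul_comm x' y']
                                         exact aux_mul_mono hdist h y')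

lemma aux_pow_mono (hdist : ∀ (a : R) (S : Set R), a * sSup S = ⨆ b ∈ S, a * b)
    {x y : R} (h : x ≤ y) (n : ℕ) : x ^ n ≤ y ^ n := by
  induction n with
  | zero => simp
  | succ n ih => rw [pow_succ, pow_succ]; exact aux_mul_mono' hdist ih h

lemma aux_pow_le_pow (hdist : ∀ (a : R) (S : Set R), a * sSup S = ⨆ b ∈ S, a * b)
    (h1 : (1 : R) = ⊤) (x : R) {m n : ℕ} (h : n ≤ m) : x ^ m ≤ x ^ n := by
  obtain ⟨k, rfl⟩ := Nat.exists_eq_add_of_le h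
  rw [pow_add]
  exact aux_mul_le_left hdist h1 _ _

/-- binomial-type estimate -/
lemma aux_sup_pow (hdist : ∀ (a : R) (S : Set R), a * sSup S = ⨆ b ∈ S, a * b)
    (h1 : (1 : R) = ⊤) (x y : R) : ∀ m n : ℕ, (x ⊔ y) ^ (m + n) ≤ x ^ m ⊔ y ^ n := by
  intro m
  induction m with
  | zero => intro n; simp [aux_le_one h1, h1]
  | succ m ihm =>
    intro n
    induction n with
    | zero => simp [aux_le_one h1, h1]
    | succ n ihn =>
      have hP1 : (x ⊔ y) ^ (m + n + 1) ≤ x ^ m ⊔ y ^ (n + 1) := by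
        have h := ihm (n + 1); rwa [show m + (n + 1) = m + n + 1 by ring] at h
      have hP2 : (x ⊔ y) ^ (m + n + 1) ≤ x ^ (m + 1) ⊔ y ^ n := by
        have h := ihn; rwa [show m + 1 + n = m + n + 1 by ring] at h
      have key : (x ⊔ y) ^ (m + 1 + (n + 1)) =
          x * (x ⊔ y) ^ (m + n + 1) ⊔ y * (x ⊔ y) ^ (m + n + 1) := by
        rw [show m + 1 + (n + 1) = (m + n + 1) + 1 by ring, pow_succ, mul_comm,
          aux_sup_mul hdist]
      rw [key]
      apply sup_le
      · refine le_trans (aux_mul_mono hdist hP1 x) ?_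
        rw [aux_mul_sup hdist]
        apply sup_le
        · rw [← pow_succ']; exact le_sup_left
        · exact le_trans (aux_mul_le_right hdist h1 _ _) le_sup_right
      · refine le_trans (aux_mul_mono hdist hP2 y) ?_
        rw [aux_mul_sup hdist]
        apply sup_le
        · exact le_trans (aux_mul_le_right hdist h1 _ _) le_sup_left
        · rw [← pow_succ']; exact le_sup_right

lemma aux_pow_compact (htop : IsCompactElement (1 : R))
    (hmulcpt : ∀ a b : R, IsCompactElement a → IsCompactElement b → IsCompactElement (a * b))
    {x : R} (hx : IsCompactElement x) (n : ℕ) : IsCompactElement (x ^ n) := by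
  induction n with
  | zero => simpa using htop
  | succ n ih => rw [pow_succ]; exact hmulcpt _ _ ih hx

/-- a compact element below the radical of b has a power below b -/
lemma aux_compact_le_rad (hdist : ∀ (a : R) (S : Set R), a * sSup S = ⨆ b ∈ S, a * b)
    (h1 : (1 : R) = ⊤) (b : R) {x : R} (hx : IsCompactElement x)
    (hle : x ≤ sSup {y : R | ∃ n : ℕ, 1 ≤ n ∧ y ^ n ≤ b}) : ∃ n : ℕ, 1 ≤ n ∧ x ^ n ≤ b := by
  classical
  obtain ⟨t, hts, hxt⟩ := (isCompactElement_iff_exists_le_sSup_of_le_sSup (k := x)).mp hx _ hle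
  have key : ∀ t : Finset R, (↑t : Set R) ⊆ {y : R | ∃ n : ℕ, 1 ≤ n ∧ y ^ n ≤ b} →
      ∃ n : ℕ, 1 ≤ n ∧ (t.sup id) ^ n ≤ b := by
    intro t
    induction t using Finset.induction_on with
    | empty => intro _; exact ⟨1, le_refl 1, by simp⟩
    | insert c s hnotmem ih =>
      intro hsub
      obtain ⟨m, hm1, hmc⟩ : ∃ n : ℕ, 1 ≤ n ∧ c ^ n ≤ b := hsub (by simp)
      obtain ⟨n, hn1, hns⟩ := ih (fun z hz => hsub (by simp [hz]))
      refine ⟨m + n, le_trans hm1 (Nat.le_add_right _ _), ?_⟩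
      rw [Finset.sup_insert]
      refine le_trans (aux_sup_pow hdist h1 (id c) (s.sup id) m n) ?_
      exact sup_le (le_trans (aux_pow_mono hdist (le_refl c) m) hmc) (le_trans hns le_rfl)
  obtain ⟨n, hn1, hnb⟩ := key t hts
  exact ⟨n, hn1, le_trans (aux_pow_mono hdist hxt n) hnb⟩

end Aux

/-- In an algebraic complete idealic semiring, for `a b : R` the following
are equivalent: (i) every compact `x ≤ a` has `xⁿ ≤ b` for some `n`; (ii) `√a ≤ √b`
where `√a = sup {x | xⁿ ≤ a for some n ≥ 1}`; (iii) every prime `p ≥ b` satisfies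
`p ≥ a` (i.e. `V(a) ⊇ V(b)`). -/
theorem stmt16 {R : Type*} [CompleteLattice R] [CommMonoid R]
    (hdist : ∀ (a : R) (S : Set R), a * sSup S = ⨆ b ∈ S, a * b)
    (h1 : (1 : R) = ⊤)
    (halg : ∀ a : R, a = sSup {x : R | IsCompactElement x ∧ x ≤ a})
    (htop : IsCompactElement (1 : R))
    (hmulcpt : ∀ a b : R, IsCompactElement a → IsCompactElement b → IsCompactElement (a * b))
    (a b : R) :
    ((∀ x : R, IsCompactElement x → x ≤ a → ∃ n : ℕ, x ^ n ≤ b) ↔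
      sSup {x : R | ∃ n : ℕ, 1 ≤ n ∧ x ^ n ≤ a} ≤ sSup {x : R | ∃ n : ℕ, 1 ≤ n ∧ x ^ n ≤ b}) ∧
    ((∀ x : R, IsCompactElement x → x ≤ a → ∃ n : ℕ, x ^ n ≤ b) ↔
      ∀ p : R, IsPrimeElt p → b ≤ p → a ≤ p) := by
  constructor
  · constructor
    · -- (i) → (ii)
      intro hi
      apply _root_.sSup_le
      rintro y ⟨n, hn1, hyn⟩
      -- show y ≤ rad b, via compacts below y
      conv_lhs => rw [halg y]
      apply _root_.sSup_le
      rintro c ⟨hc, hcy⟩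
      have hcn : c ^ n ≤ a := le_trans (aux_pow_mono hdist hcy n) hyn
      have hcnc : IsCompactElement (c ^ n) := aux_pow_compact htop hmulcpt hc n
      obtain ⟨m, hm⟩ := hi _ hcnc hcn
      rcases Nat.eq_zero_or_pos m with rfl | hm1
      · -- then 1 ≤ b, so b = ⊤
        have : (1 : R) ≤ b := by simpa using hm
        exact _root_.le_sSup ⟨1, le_refl 1, by simpa using le_trans (aux_le_one h1 c) this⟩
      · refine _root_.le_sSup ⟨n * m, ?_, ?_⟩
        · exact Nat.one_le_iff_ne_zero.mpr (by positivity)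
        · rw [pow_mul]; exact hm
    · -- (ii) → (i)
      intro hii x hx hxa
      have hxrad : x ≤ sSup {y : R | ∃ n : ℕ, 1 ≤ n ∧ y ^ n ≤ b} :=
        le_trans (_root_.le_sSup (show x ∈ {y : R | ∃ n : ℕ, 1 ≤ n ∧ y ^ n ≤ a} from ⟨1, le_refl 1, by simpa using hxa⟩)) hii
      obtain ⟨n, _, hn⟩ := aux_compact_le_rad hdist h1 b hx hxrad
      exact ⟨n, hn⟩
  · constructor
    · -- (i) → (iii)
      intro hi p hp hbp
      conv_lhs => rw [halg a]
      apply _root_.sSup_le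
      rintro c ⟨hc, hca⟩
      obtain ⟨n, hn⟩ := hi c hc hca
      by_contra hcp
      have hpow : ∀ m : ℕ, ¬ c ^ m ≤ p := by
        intro m
        induction m with
        | zero => simpa using hp.1
        | succ m ih => rw [pow_succ]; exact hp.2 _ _ ih hcp
      exact hpow n (le_trans hn hbp)
    · -- (iii) → (i)
      intro hiii x hx hxa
      by_contra hcon
      push_neg at hcon
      -- Zorn on S = {p | b ≤ p ∧ ∀ n, ¬ x ^ n ≤ p}
      set S : Set R := {p | b ≤ p ∧ ∀ n : ℕ, ¬ x ^ n ≤ p} with hS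
      have hbS : b ∈ S := ⟨le_refl b, fun n hn => hcon n (le_trans hn (le_refl b))⟩
      obtain ⟨p, hbp, hpS, hpmax⟩ :
          ∃ p, b ≤ p ∧ Maximal (· ∈ S) p := by
        apply zorn_le_nonempty₀ S ?_ b hbS
        intro c hcS hchain y hy
        refine ⟨sSup c, ⟨le_trans (hcS hy).1 (_root_.le_sSup hy), ?_⟩, fun z hz => _root_.le_sSup hz⟩
        intro n hn
        have hcpt : IsCompactElement (x ^ n) := aux_pow_compact htop hmulcpt hx n
        rw [isCompactElement_iff_le_of_directed_sSup_le] at hcpt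
        obtain ⟨z, hzc, hz⟩ := hcpt c ⟨y, hy⟩ hchain.directedOn hn
        exact (hcS hzc).2 n hz
      obtain ⟨hbp', hpows⟩ := hpS
      -- p is prime
      have hprime : IsPrimeElt p := by
        refine ⟨by simpa using hpows 0, ?_⟩
        intro c d hcp hdp hcdp
        have key : ∀ e : R, ¬ e ≤ p → ∃ m : ℕ, x ^ m ≤ p ⊔ e := by
          intro e hep
          by_contra hno
          push_neg at hno
          have hmem : p ⊔ e ∈ S := ⟨le_trans hbp' le_sup_left, hno⟩
          have := hpmax hmem le_sup_left
          exact hep (le_trans le_sup_right this)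
        obtain ⟨m, hm⟩ := key c hcp
        obtain ⟨k, hk⟩ := key d hdp
        have hmul : x ^ (m + k) ≤ (p ⊔ c) * (p ⊔ d) := by
          rw [pow_add]; exact aux_mul_mono' hdist hm hk
        have hexp : (p ⊔ c) * (p ⊔ d) ≤ p ⊔ c * d := by
          rw [mul_comm, aux_mul_sup hdist]
          apply sup_le
          · exact le_trans (aux_mul_le_right hdist h1 _ _) le_sup_left
          · rw [mul_comm, aux_mul_sup hdist]
            apply sup_le
            · exact le_trans (aux_mul_le_right hdist h1 _ _) le_sup_left
            · rw [mul_comm]; exact le_sup_right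
        have : x ^ (m + k) ≤ p := by
          refine le_trans (le_trans hmul hexp) ?_
          exact sup_le le_rfl hcdp
        exact hpows (m + k) this
      have hap : a ≤ p := hiii p hprime hbp'
      exact hpows 1 (by simpa using le_trans hxa hap)
end

section
/- Let R be an algebraic complete idealic semiring and Σ a multiplicative submonoid of R consisting of compact elements. Let 𝔞 be the congruence relation on R generated by the pairs (1, s) for s ∈ Σ. Then (f, g) ∈ 𝔞 if and only if: for every compact x ≤ f there exists s ∈ Σ with s·x ≤ g, and for every compact y ≤ g there exists t ∈ Σ with t·y ≤ f. -/
open CompleteLattice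

/-- A congruence relation on a complete semiring: an equivalence relation compatible
with arbitrary suprema and with multiplication. -/
def IsCong {R : Type*} [CompleteLattice R] [Mul R] (r : R → R → Prop) : Prop :=
  Equivalence r ∧
  (∀ S : Set (R × R), (∀ p ∈ S, r p.1 p.2) →
    r (sSup (Prod.fst '' S)) (sSup (Prod.snd '' S))) ∧
  (∀ a b c d : R, r a b → r c d → r (a * c) (b * d))

/-- The congruence relation generated by a set of pairs: the smallest congruence
containing them (as a relation, the intersection of all congruences containing them). -/
def congCl {R : Type*} [CompleteLattice R] [Mul R] (s : Set (R × R)) (a b : R) : Prop :=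
  ∀ r : R → R → Prop, IsCong r → (∀ p ∈ s, r p.1 p.2) → r a b

/-- Let `R` be an algebraic complete idealic semiring, `M` a multiplicative
submonoid of compact elements, and `𝔞` the congruence generated by `{(1, s) | s ∈ M}`.
Then `(f, g) ∈ 𝔞` iff for every compact `x ≤ f` there is `s ∈ M` with `s·x ≤ g`, and
for every compact `y ≤ g` there is `t ∈ M` with `t·y ≤ f`. -/
theorem stmt19 {R : Type*} [CompleteLattice R] [CommMonoid R]
    (hdist : ∀ (a : R) (S : Set R), a * sSup S = ⨆ b ∈ S, a * b)
    (h1 : (1 : R) = ⊤)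
    (halg : ∀ a : R, a = sSup {x : R | IsCompactElement x ∧ x ≤ a})
    (htop : IsCompactElement (1 : R))
    (hmulcpt : ∀ a b : R, IsCompactElement a → IsCompactElement b → IsCompactElement (a * b))
    (M : Set R) (h1M : (1 : R) ∈ M) (hmulM : ∀ s ∈ M, ∀ t ∈ M, s * t ∈ M)
    (hcptM : ∀ s ∈ M, IsCompactElement s)
    (f g : R) :
    congCl {p : R × R | p.1 = 1 ∧ p.2 ∈ M} f g ↔
      ((∀ x : R, IsCompactElement x → x ≤ f → ∃ s ∈ M, s * x ≤ g) ∧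
       (∀ y : R, IsCompactElement y → y ≤ g → ∃ t ∈ M, t * y ≤ f)) := by
  -- multiplication is monotone in the second argument
  have hmono : ∀ a b c : R, a ≤ b → c * a ≤ c * b := by
    intro a b c h
    have h2 := hdist c {a, b}
    have h3 : sSup ({a, b} : Set R) = b := by rw [sSup_pair, sup_eq_right.2 h]
    rw [h3] at h2
    rw [h2]
    exact le_iSup₂_of_le a (by simp) le_rfl
  have hle1 : ∀ a b : R, a * b ≤ b := by
    intro a b
    calc a * b = b * a := mul_comm a b
      _ ≤ b * 1 := hmono _ _ _ (h1 ▸ le_top)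
      _ = b := mul_one b
  have hmm : ∀ a b c d : R, a ≤ b → c ≤ d → a * c ≤ b * d := by
    intro a b c d hab hcd
    calc a * c = c * a := mul_comm a c
      _ ≤ c * b := hmono _ _ _ hab
      _ = b * c := mul_comm c b
      _ ≤ b * d := hmono _ _ _ hcd
  -- key absorption lemma
  have absorb : ∀ (G : R) (D : Set R) (x : R), IsCompactElement x → x ≤ sSup D →
      (∀ d ∈ D, ∃ s ∈ M, s * d ≤ G) → ∃ s ∈ M, s * x ≤ G := by
    intro G D x hx hxD hD
    obtain ⟨T, hTD, hxT⟩ := (isCompactElement_iff_exists_le_sSup_of_le_sSup R x).1 hx D hxD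
    choose! sfun hsM hsle using hD
    refine ⟨T.prod sfun, ?_, ?_⟩
    · refine Finset.prod_induction _ (· ∈ M) (fun a b ha hb => hmulM a ha b hb) h1M ?_
      intro d hd; exact hsM d (hTD hd)
    · have hxT' : x ≤ sSup (↑T : Set R) := by rwa [Finset.sup_id_eq_sSup] at hxT
      calc T.prod sfun * x ≤ T.prod sfun * sSup ↑T := hmono _ _ _ hxT'
        _ = ⨆ d ∈ (↑T : Set R), T.prod sfun * d := hdist _ _
        _ ≤ G := by
            refine iSup₂_le fun d hd => ?_
            have hd' : d ∈ T := hd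
            obtain ⟨u, hu⟩ := Finset.dvd_prod_of_mem sfun hd'
            calc T.prod sfun * d = u * (sfun d * d) := by
                  rw [hu, mul_comm (sfun d) u, mul_assoc]
              _ ≤ sfun d * d := hle1 _ _
              _ ≤ G := hsle d (hTD hd')
  -- the saturation relation
  let r : R → R → Prop := fun a b =>
    (∀ x : R, IsCompactElement x → x ≤ a → ∃ s ∈ M, s * x ≤ b) ∧
    (∀ y : R, IsCompactElement y → y ≤ b → ∃ t ∈ M, t * y ≤ a)
  have hrefl : ∀ a : R, r a a := by
    intro a
    constructor <;> exact fun x _ hx => ⟨1, h1M, by rw [one_mul]; exact hx⟩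
  have htrans1 : ∀ a b c : R,
      (∀ x : R, IsCompactElement x → x ≤ a → ∃ s ∈ M, s * x ≤ b) →
      (∀ x : R, IsCompactElement x → x ≤ b → ∃ s ∈ M, s * x ≤ c) →
      (∀ x : R, IsCompactElement x → x ≤ a → ∃ s ∈ M, s * x ≤ c) := by
    intro a b c hab hbc x hx hxa
    obtain ⟨s, hs, hsx⟩ := hab x hx hxa
    obtain ⟨t, ht, htx⟩ := hbc (s * x) (hmulcpt _ _ (hcptM s hs) hx) hsx
    exact ⟨t * s, hmulM t ht s hs, by rw [mul_assoc]; exact htx⟩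
  -- half of sup-compatibility
  have hsup1 : ∀ S : Set (R × R),
      (∀ p ∈ S, ∀ x : R, IsCompactElement x → x ≤ p.1 → ∃ s ∈ M, s * x ≤ p.2) →
      ∀ x : R, IsCompactElement x → x ≤ sSup (Prod.fst '' S) →
        ∃ s ∈ M, s * x ≤ sSup (Prod.snd '' S) := by
    intro S hS x hx hxS
    set D : Set R := ⋃ p ∈ S, {c : R | IsCompactElement c ∧ c ≤ p.1} with hD
    have hle : sSup (Prod.fst '' S) ≤ sSup D := by
      refine sSup_le fun a ha => ?_
      obtain ⟨p, hp, rfl⟩ := ha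
      calc p.1 = sSup {x : R | IsCompactElement x ∧ x ≤ p.1} := halg p.1
        _ ≤ sSup D := sSup_le_sSup (fun c hc => Set.mem_biUnion hp hc)
    refine absorb _ D x hx (hxS.trans hle) ?_
    intro d hd
    obtain ⟨p, hp, hdc, hdp⟩ := Set.mem_iUnion₂.mp hd
    obtain ⟨s, hs, hsd⟩ := hS p hp d hdc hdp
    exact ⟨s, hs, hsd.trans (le_sSup ⟨p, hp, rfl⟩)⟩
  -- half of mul-compatibility
  have hmul1 : ∀ a b c d : R,
      (∀ x : R, IsCompactElement x → x ≤ a → ∃ s ∈ M, s * x ≤ b) →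
      (∀ x : R, IsCompactElement x → x ≤ c → ∃ s ∈ M, s * x ≤ d) →
      ∀ x : R, IsCompactElement x → x ≤ a * c → ∃ s ∈ M, s * x ≤ b * d := by
    intro a b c d hab hcd x hx hxac
    set D : Set R := {z : R | ∃ a' c' : R, IsCompactElement a' ∧ a' ≤ a ∧
      IsCompactElement c' ∧ c' ≤ c ∧ z = a' * c'} with hDdef
    have hle : a * c ≤ sSup D := by
      conv_lhs => rw [halg c]
      rw [hdist]
      refine iSup₂_le fun c' hc' => ?_
      rw [mul_comm]
      conv_lhs => rw [halg a]
      rw [hdist]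
      refine iSup₂_le fun a' ha' => ?_
      exact le_sSup ⟨a', c', ha'.1, ha'.2, hc'.1, hc'.2, mul_comm c' a'⟩
    refine absorb _ D x hx (hxac.trans hle) ?_
    rintro z ⟨a', c', ha'c, ha'le, hc'c, hc'le, rfl⟩
    obtain ⟨s, hs, hsa⟩ := hab a' ha'c ha'le
    obtain ⟨t, ht, htc⟩ := hcd c' hc'c hc'le
    refine ⟨s * t, hmulM s hs t ht, ?_⟩
    calc s * t * (a' * c') = (s * a') * (t * c') := by
          rw [mul_assoc, mul_assoc, mul_comm t (a' * c'), mul_assoc, mul_comm c' t]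
      _ ≤ b * d := hmm _ _ _ _ hsa htc
  have hcong : IsCong r := by
    refine ⟨⟨hrefl, fun h => ⟨h.2, h.1⟩, fun hab hbc =>
      ⟨htrans1 _ _ _ hab.1 hbc.1, htrans1 _ _ _ hbc.2 hab.2⟩⟩, ?_, ?_⟩
    · intro S hS
      constructor
      · exact hsup1 S (fun p hp => (hS p hp).1)
      · have := hsup1 (Prod.swap '' S) (by
          rintro q ⟨p, hp, rfl⟩
          exact (hS p hp).2)
        rwa [Set.image_image, Set.image_image] at this
    · intro a b c d hab hcd
      exact ⟨hmul1 a b c d hab.1 hcd.1, hmul1 b a d c hab.2 hcd.2⟩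
  have hgen : ∀ p ∈ {p : R × R | p.1 = 1 ∧ p.2 ∈ M}, r p.1 p.2 := by
    rintro ⟨u, v⟩ ⟨hu, hv⟩
    dsimp at hu ⊢
    subst hu
    constructor
    · intro x hx hx1
      exact ⟨v, hv, le_trans (hmono _ _ _ hx1) (by rw [mul_one])⟩
    · intro y hy hyv
      exact ⟨1, h1M, by rw [one_mul, h1]; exact le_top⟩
  constructor
  · intro h
    exact h r hcong hgen
  · rintro ⟨hfg, hgf⟩
    intro r' hr' hgen'
    obtain ⟨heq, hsupc, hmulc⟩ := hr'
    -- r' (f ⊔ b) a when every compact y ≤ b satisfies t y * y ≤ a for some t y ∈ M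
    have key : ∀ a b : R, (∀ y : R, IsCompactElement y → y ≤ b → ∃ t ∈ M, t * y ≤ a) →
        r' (a ⊔ b) a := by
      intro a b hba
      choose! tf htM htle using hba
      set A : Set R := {y : R | IsCompactElement y ∧ y ≤ b} with hA
      set S : Set (R × R) := insert (a, a) ((fun y => (y, tf y * y)) '' A) with hS
      have hrel : ∀ p ∈ S, r' p.1 p.2 := by
        rintro p hp
        rcases hp with rfl | ⟨y, hy, rfl⟩
        · exact heq.refl a
        · have h1y : r' 1 (tf y) := hgen' (1, tf y) ⟨rfl, htM y hy.1 hy.2⟩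
          have := hmulc 1 (tf y) y y h1y (heq.refl y)
          rwa [one_mul] at this
      have := hsupc S hrel
      have e1 : sSup (Prod.fst '' S) = a ⊔ b := by
        rw [hS, Set.image_insert_eq, Set.image_image]
        simp only [sSup_insert]
        congr 1
        rw [Set.image_id']
        exact (halg b).symm
      have e2 : sSup (Prod.snd '' S) = a := by
        rw [hS, Set.image_insert_eq, Set.image_image]
        simp only [sSup_insert]
        refine sup_eq_left.2 ?_
        refine sSup_le ?_
        rintro z ⟨y, hy, rfl⟩
        exact htle y hy.1 hy.2
      rwa [e1, e2] at this
    have h1' : r' (f ⊔ g) f := key f g hgf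
    have h2' : r' (f ⊔ g) g := by
      have := key g f hfg
      rwa [sup_comm] at this
    exact heq.trans (heq.symm h1') h2'
end
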